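/- Let R be a UFD containing ℚ, let m, n ∈ ℤ_{≥0}, and let a, b ∈ R \ {0} with gcd(a,b) = 1. Let D be the R-derivation on R[x,y] given by D = a·y^m ∂/∂x + b·x^n ∂/∂y. Then the kernel R[x,y]^D equals R[ b(m+1)x^{n+1} − a(n+1)y^{m+1} ]. -/

import Mathlib

open MvPolynomial

noncomputable section

namespace KerAux

open Finsupp Finset

variable {R : Type*} [CommRing R]

/-- exponent pair -/
def pr (p q : ℕ) : Fin 2 →₀ ℕ := Finsupp.single 0 p + Finsupp.single 1 q

lemma pr_apply0 (p q : ℕ) : pr p q 0 = p := by simp [pr, Finsupp.single_apply]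
lemma pr_apply1 (p q : ℕ) : pr p q 1 = q := by simp [pr, Finsupp.single_apply]

lemma eq_pr (d : Fin 2 →₀ ℕ) : d = pr (d 0) (d 1) := by
  ext i
  fin_cases i
  · simp [pr_apply0]
  · simp [pr_apply1]

lemma pr_inj {p q p' q' : ℕ} (h : pr p q = pr p' q') : p = p' ∧ q = q' := by
  constructor
  · have := congrArg (fun d => d 0) h; simpa [pr_apply0] using this
  · have := congrArg (fun d => d 1) h; simpa [pr_apply1] using this

lemma single1_le_pr {p q k : ℕ} : Finsupp.single (1 : Fin 2) k ≤ pr p q ↔ k ≤ q := by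
  constructor
  · intro h; have := h 1; simpa [pr_apply1] using this
  · intro h i
    fin_cases i
    · simp [pr_apply0, Finsupp.single_apply]
    · simpa [pr_apply1, Finsupp.single_apply] using h

lemma single0_le_pr {p q k : ℕ} : Finsupp.single (0 : Fin 2) k ≤ pr p q ↔ k ≤ p := by
  constructor
  · intro h; have := h 0; simpa [pr_apply0] using this
  · intro h i
    fin_cases i
    · simpa [pr_apply0, Finsupp.single_apply] using h
    · simp [pr_apply1, Finsupp.single_apply]

lemma pr_sub_single1 {p q k : ℕ} : pr p q - Finsupp.single (1:Fin 2) k = pr p (q - k) := by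
  ext i
  fin_cases i
  · simp [pr, Finsupp.single_apply, Finsupp.sub_apply]
  · simp [pr, Finsupp.single_apply, Finsupp.sub_apply]

lemma pr_sub_single0 {p q k : ℕ} : pr p q - Finsupp.single (0:Fin 2) k = pr (p-k) q := by
  ext i
  fin_cases i
  · simp [pr, Finsupp.single_apply, Finsupp.sub_apply]
  · simp [pr, Finsupp.single_apply, Finsupp.sub_apply]

lemma pr_add_single0 {p q k : ℕ} : pr p q + Finsupp.single (0:Fin 2) k = pr (p+k) q := by
  ext i
  fin_cases i
  · simp [pr, Finsupp.single_apply]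
  · simp [pr, Finsupp.single_apply]

lemma pr_add_single1 {p q k : ℕ} : pr p q + Finsupp.single (1:Fin 2) k = pr p (q+k) := by
  ext i
  fin_cases i
  · simp [pr, Finsupp.single_apply]
  · simp [pr, Finsupp.single_apply]

lemma pr_smul (k p q : ℕ) : k • pr p q = pr (k*p) (k*q) := by
  simp [pr, Finsupp.smul_single, smul_add, mul_comm]

lemma pr_add (p q p' q' : ℕ) : pr p q + pr p' q' = pr (p+p') (q+q') := by
  simp only [pr]
  rw [Finsupp.single_add, Finsupp.single_add]
  abel

lemma pr_sum (p q : ℕ) : (pr p q).sum (fun _ e => e) = p + q := by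
  classical
  rw [pr, Finsupp.sum_add_index' (fun _ => rfl) (fun _ _ _ => rfl),
    Finsupp.sum_single_index rfl, Finsupp.sum_single_index rfl]

lemma coeff_pderiv (i : Fin 2) (d : Fin 2 →₀ ℕ) (f : MvPolynomial (Fin 2) R) :
    coeff d (pderiv i f) = (d i + 1) * coeff (d + Finsupp.single i 1) f := by
  induction f using MvPolynomial.induction_on' with
  | monomial s r =>
    rw [pderiv_monomial, coeff_monomial, coeff_monomial]
    by_cases hs : s i = 0
    · have h1 : ¬ s = d + Finsupp.single i 1 := by
        intro h
        have := congrArg (fun e => e i) h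
        simp [hs] at this
      rw [if_neg h1]
      by_cases h2 : s - Finsupp.single i 1 = d
      · simp [h2, hs]
      · simp [h2]
    · have key : d = s - Finsupp.single i 1 ↔ d + Finsupp.single i 1 = s := by
        constructor
        · rintro rfl
          ext j
          by_cases hj : j = i
          · subst hj; simp [Finsupp.sub_apply, Finsupp.single_apply]; omega
          · simp [Finsupp.sub_apply, Finsupp.single_apply, hj]
        · rintro rfl; ext j; simp [Finsupp.sub_apply]
      by_cases h2 : d + Finsupp.single i 1 = s
      · rw [if_pos (key.2 h2).symm, if_pos h2.symm]
        have : d i + 1 = s i := by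
          have := congrArg (fun e => e i) h2
          simpa using this
        rw [← this]
        push_cast
        ring
      · rw [if_neg (fun h => h2 (key.1 h.symm)), if_neg (fun h => h2 h.symm), mul_zero]
  | add f g hf hg => simp [hf, hg]; ring

/-- coefficient of `f` at `x^i y^j` -/
def cf (f : MvPolynomial (Fin 2) R) (i j : ℕ) : R := coeff (pr i j) f

variable (m n : ℕ) (a b : R)

lemma master {f : MvPolynomial (Fin 2) R}
    (hf : C a * X 1 ^ m * pderiv 0 f + C b * X 0 ^ n * pderiv 1 f = 0) (p q : ℕ) :
    a * (p+1) * (if m ≤ q then cf f (p+1) (q-m) else 0)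
      + b * (q+1) * (if n ≤ p then cf f (p-n) (q+1) else 0) = 0 := by
  have h0 := congrArg (coeff (pr p q)) hf
  rw [coeff_add, coeff_zero] at h0
  rw [C_mul_X_pow_eq_monomial, C_mul_X_pow_eq_monomial] at h0
  rw [mul_comm ((monomial (Finsupp.single 1 m)) a) (pderiv 0 f),
      mul_comm ((monomial (Finsupp.single 0 n)) b) (pderiv 1 f),
      coeff_mul_monomial', coeff_mul_monomial'] at h0
  simp only [single1_le_pr, single0_le_pr, pr_sub_single1, pr_sub_single0, coeff_pderiv,
    pr_add_single0, pr_add_single1, pr_apply0, pr_apply1] at h0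
  convert h0 using 2
  · split_ifs with h
    · show a * (↑p + 1) * cf f (p + 1) (q - m) = (↑p+1) * cf f (p+1) (q-m) * a
      ring
    · ring
  · split_ifs with h
    · show b * (↑q + 1) * cf f (p-n) (q+1) = (↑q+1) * cf f (p-n) (q+1) * b
      ring
    · ring

/-- coefficients along the lattice -/
def ee (f : MvPolynomial (Fin 2) R) (t u : ℕ) : R := cf f (t*(n+1)) (u*(m+1))

lemma L3 {f : MvPolynomial (Fin 2) R}
    (hf : C a * X 1 ^ m * pderiv 0 f + C b * X 0 ^ n * pderiv 1 f = 0) (t u : ℕ) :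
    a * ((t:R)+1) * ((n:R)+1) * ee m n f (t+1) u
      + b * ((u:R)+1) * ((m:R)+1) * ee m n f t (u+1) = 0 := by
  have h := master m n a b hf (t*(n+1)+n) (u*(m+1)+m)
  rw [if_pos (by omega : m ≤ u*(m+1)+m), if_pos (by omega : n ≤ t*(n+1)+n)] at h
  have e1 : u*(m+1)+m-m = u*(m+1) := by omega
  have e2 : t*(n+1)+n+1 = (t+1)*(n+1) := by ring
  have e3 : t*(n+1)+n-n = t*(n+1) := by omega
  have e4 : u*(m+1)+m+1 = (u+1)*(m+1) := by ring
  rw [e1, e2, e3, e4] at h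
  show _ = (0:R)
  rw [← h]
  push_cast
  unfold ee
  ring

variable [IsDomain R] [CharZero R]

lemma L1 (ha : a ≠ 0) {f : MvPolynomial (Fin 2) R}
    (hf : C a * X 1 ^ m * pderiv 0 f + C b * X 0 ^ n * pderiv 1 f = 0) :
    ∀ i j, ¬ ((n+1) ∣ i) → cf f i j = 0 := by
  intro i
  induction i using Nat.strong_induction_on with
  | _ i IH =>
    intro j hdvd
    match i, hdvd with
    | 0, hdvd => exact absurd (dvd_zero _) hdvd
    | p+1, hdvd =>
      have h := master m n a b hf p (j+m)
      rw [if_pos (Nat.le_add_left m j), Nat.add_sub_cancel] at h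
      have hz : (if n ≤ p then cf f (p-n) (j+m+1) else 0) = 0 := by
        split_ifs with hnp
        · refine IH (p-n) (by omega) (j+m+1) (fun hd => hdvd ?_)
          have : p+1 = (p-n)+(n+1) := by omega
          rw [this]
          exact dvd_add hd dvd_rfl
        · rfl
      rw [hz, mul_zero, add_zero] at h
      have hp1 : ((p:R)+1) ≠ 0 := by
        have := Nat.cast_add_one_ne_zero (R := R) p
        exact_mod_cast this
      rcases mul_eq_zero.mp h with h' | h'
      · exact absurd h' (mul_ne_zero ha hp1)
      · exact h'

lemma L2 (hb : b ≠ 0) {f : MvPolynomial (Fin 2) R}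
    (hf : C a * X 1 ^ m * pderiv 0 f + C b * X 0 ^ n * pderiv 1 f = 0) :
    ∀ j i, ¬ ((m+1) ∣ j) → cf f i j = 0 := by
  intro j
  induction j using Nat.strong_induction_on with
  | _ j IH =>
    intro i hdvd
    match j, hdvd with
    | 0, hdvd => exact absurd (dvd_zero _) hdvd
    | q+1, hdvd =>
      have h := master m n a b hf (i+n) q
      rw [if_pos (Nat.le_add_left n i), Nat.add_sub_cancel] at h
      have hz : (if m ≤ q then cf f (i+n+1) (q-m) else 0) = 0 := by
        split_ifs with hmq
        · refine IH (q-m) (by omega) (i+n+1) (fun hd => hdvd ?_)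
          have : q+1 = (q-m)+(m+1) := by omega
          rw [this]
          exact dvd_add hd dvd_rfl
        · rfl
      rw [hz, mul_zero, zero_add] at h
      have hq1 : ((q:R)+1) ≠ 0 := by
        have := Nat.cast_add_one_ne_zero (R := R) q
        exact_mod_cast this
      rcases mul_eq_zero.mp h with h' | h'
      · exact absurd h' (mul_ne_zero hb hq1)
      · exact h'

lemma L4 {f : MvPolynomial (Fin 2) R}
    (hf : C a * X 1 ^ m * pderiv 0 f + C b * X 0 ^ n * pderiv 1 f = 0) :
    ∀ u t, (b*((m:R)+1))^u * ee m n f t u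
      = ((t+u).choose u : R) * (-(a*((n:R)+1)))^u * ee m n f (t+u) 0 := by
  intro u
  induction u with
  | zero => intro t; simp
  | succ u IH =>
    intro t
    have hrec := L3 m n a b hf t u
    have ih := IH (t+1)
    have hch : (((u:R)+1)) * ((t+u+1).choose (u+1) : R) = (((t:R)+1)) * ((t+u+1).choose u : R) := by
      have hN : (t+u+1).choose (u+1) * (u+1) = (t+u+1).choose u * (t+1) := by
        rw [Nat.choose_succ_right_eq]
        congr 2
        omega
      have h := congrArg (fun k : ℕ => (k : R)) hN
      push_cast at h
      linear_combination h
    have hu1 : ((u:R)+1) ≠ 0 := by exact_mod_cast Nat.cast_add_one_ne_zero (R := R) u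
    show (b*((m:R)+1))^(u+1) * ee m n f t (u+1)
      = (((t+u+1).choose (u+1) : ℕ) : R) * (-(a*((n:R)+1)))^(u+1) * ee m n f (t+u+1) 0
    apply mul_left_cancel₀ hu1
    have ht : t + 1 + u = t + u + 1 := by ring
    rw [ht] at ih
    linear_combination ((b*((m:R)+1))^u) * hrec + (-(a*((t:R)+1)*((n:R)+1))) * ih
      - ((-(a*((n:R)+1)))^(u+1) * ee m n f (t+u+1) 0) * hch

lemma wp_pow_eq (A B : R) (s : ℕ) :
    (C A * X 0 ^ (n+1) + C B * X 1 ^ (m+1) : MvPolynomial (Fin 2) R)^s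
      = ∑ t ∈ Finset.range (s+1),
          monomial (pr (t*(n+1)) ((s-t)*(m+1))) (A^t * B^(s-t) * (s.choose t : R)) := by
  rw [add_pow]
  refine Finset.sum_congr rfl fun t ht => ?_
  rw [C_mul_X_pow_eq_monomial, C_mul_X_pow_eq_monomial, monomial_pow, monomial_pow]
  have hc : ((s.choose t : ℕ) : MvPolynomial (Fin 2) R) = C ((s.choose t : ℕ) : R) :=
    (map_natCast (C : R →+* MvPolynomial (Fin 2) R) _).symm
  rw [hc, monomial_mul]
  rw [show (C ((s.choose t : ℕ) : R) : MvPolynomial (Fin 2) R)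
        = monomial (0 : Fin 2 →₀ ℕ) ((s.choose t : ℕ) : R) from rfl, monomial_mul]
  congr 1
  · have h1 : (Finsupp.single (0:Fin 2) (n+1)) = pr (n+1) 0 := by simp [pr]
    have h2 : (Finsupp.single (1:Fin 2) (m+1)) = pr 0 (m+1) := by simp [pr]
    rw [h1, h2, pr_smul, pr_smul, pr_add]
    simp [mul_comm]

lemma coeff_wp_pow (A B : R) (s : ℕ) (d : Fin 2 →₀ ℕ) :
    coeff d ((C A * X 0 ^ (n+1) + C B * X 1 ^ (m+1) : MvPolynomial (Fin 2) R)^s)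
      = ∑ t ∈ Finset.range (s+1),
          (if pr (t*(n+1)) ((s-t)*(m+1)) = d then A^t * B^(s-t) * (s.choose t : R) else 0) := by
  rw [wp_pow_eq, coeff_sum]
  exact Finset.sum_congr rfl fun t ht => coeff_monomial _ _ _

end KerAux

end

/-- **Lemma 3.4 (b).** Let `R` be a UFD containing `ℚ`, `m, n ≥ 0`, and `a, b ∈ R \ {0}`
with `gcd (a, b) = 1`.  For the derivation `D = a y^m ∂x + b x^n ∂y` on `R[x,y]` one has
`R[x,y]^D = R[b(m+1) x^(n+1) - a(n+1) y^(m+1)]`. -/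
theorem kernel_of_ay_m_dx_add_bx_n_dy
    (R : Type*) [CommRing R] [IsDomain R] [UniqueFactorizationMonoid R] [Algebra ℚ R]
    (m n : ℕ) (a b : R) (ha : a ≠ 0) (hb : b ≠ 0) (hab : IsRelPrime a b)
    (D : Derivation R (MvPolynomial (Fin 2) R) (MvPolynomial (Fin 2) R))
    (hD : D = (C a * X 1 ^ m : MvPolynomial (Fin 2) R) • pderiv 0
              + (C b * X 0 ^ n : MvPolynomial (Fin 2) R) • pderiv 1) :
    ∀ f : MvPolynomial (Fin 2) R,
      D f = 0 ↔ f ∈ Algebra.adjoin R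
        {(C (b * (m + 1 : R)) * X 0 ^ (n + 1) - C (a * (n + 1 : R)) * X 1 ^ (m + 1) :
          MvPolynomial (Fin 2) R)} := by
  classical
  haveI : CharZero R := charZero_of_injective_algebraMap (algebraMap ℚ R).injective
  open KerAux Finset in
  intro f
  set w : MvPolynomial (Fin 2) R :=
    C (b * (m + 1 : R)) * X 0 ^ (n + 1) - C (a * (n + 1 : R)) * X 1 ^ (m + 1) with hw
  have hwAB : w = C (b*((m:R)+1)) * X 0 ^ (n+1) + C (-(a*((n:R)+1))) * X 1 ^ (m+1) := by
    rw [hw, map_neg]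
    push_cast
    ring
  have hU : ∀ k : ℕ, IsUnit ((k:R)+1) := by
    intro k
    have h1 : ((k:ℚ)+1) ≠ 0 := by positivity
    have := (isUnit_iff_ne_zero.mpr h1).map (algebraMap ℚ R)
    rwa [map_add, map_natCast, map_one] at this
  constructor
  · -- hard direction
    intro h
    have hf : C a * X 1 ^ m * pderiv 0 f + C b * X 0 ^ n * pderiv 1 f = 0 := by
      rw [hD] at h
      exact h
    have hL1 := KerAux.L1 m n a b ha hf
    have hL2 := KerAux.L2 m n a b hb hf
    have hL4 := KerAux.L4 m n a b hf
    -- divisibility to define the lambdas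
    have hdvd : ∀ s : ℕ, (b*((m:R)+1))^s ∣ ee m n f s 0 := by
      intro s
      have h4 := hL4 s 0
      rw [Nat.zero_add, Nat.choose_self, Nat.cast_one, one_mul, neg_pow, mul_pow, mul_pow] at h4
      have h5 : b^s ∣ a^s * ((-1:R)^s * (((n:R)+1)^s * ee m n f s 0)) :=
        ⟨((m:R)+1)^s * ee m n f 0 s, by linear_combination -h4⟩
      have h6 := (hab.symm.pow (n := s) (m := s)).dvd_of_dvd_mul_left h5
      rw [(((isUnit_one (M := R)).neg).pow s).dvd_mul_left,
        ((hU n).pow s).dvd_mul_left] at h6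
      obtain ⟨c, hc⟩ := h6
      obtain ⟨v, hv⟩ := ((hU m).pow s).exists_right_inv
      exact ⟨v * c, by rw [mul_pow]; linear_combination hc - (b^s * c) * hv⟩
    choose lam hlam using hdvd
    have hAne : (b*((m:R)+1)) ≠ 0 :=
      mul_ne_zero hb (by exact_mod_cast Nat.cast_add_one_ne_zero (R := R) m)
    have hL6 : ∀ t u, ee m n f t u
        = ((t+u).choose t : R) * (b*((m:R)+1))^t * (-(a*((n:R)+1)))^u * lam (t+u) := by
      intro t u
      have h4 := hL4 u t
      rw [hlam (t+u)] at h4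
      have hcc : ((t+u).choose u : R) = ((t+u).choose t : R) := by
        congr 1
        rw [← Nat.choose_symm (Nat.le_add_right t u)]
        congr 1
        omega
      apply mul_left_cancel₀ (pow_ne_zero u hAne)
      rw [h4, hcc]
      ring
    set N := f.totalDegree with hN
    have hfg : f = ∑ s ∈ Finset.range (N+1), C (lam s) * w ^ s := by
      apply MvPolynomial.ext
      intro d
      obtain ⟨i, j, rfl⟩ : ∃ i j, d = pr i j := ⟨d 0, d 1, eq_pr d⟩
      rw [coeff_sum]
      simp only [coeff_C_mul, hwAB, coeff_wp_pow]
      show cf f i j = _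
      by_cases h1 : (n+1) ∣ i
      · by_cases h2 : (m+1) ∣ j
        · obtain ⟨t, ht⟩ := h1
          obtain ⟨u, hu⟩ := h2
          rw [mul_comm] at ht hu
          subst ht hu
          have hinner : ∀ s, (∑ t' ∈ Finset.range (s+1),
              if pr (t'*(n+1)) ((s-t')*(m+1)) = pr (t*(n+1)) (u*(m+1)) then
                (b*((m:R)+1))^t' * (-(a*((n:R)+1)))^(s-t') * (s.choose t' : R) else 0)
              = if s = t+u then
                  (b*((m:R)+1))^t * (-(a*((n:R)+1)))^u * (s.choose t : R) else 0 := by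
            intro s
            by_cases hs : s = t+u
            · subst hs
              have htu : t+u-t = u := by omega
              rw [if_pos rfl, Finset.sum_eq_single t]
              · rw [htu, if_pos rfl]
              · intro t' ht' hne
                rw [if_neg]
                intro hpr
                exact hne (Nat.eq_of_mul_eq_mul_right (by omega) (pr_inj hpr).1)
              · intro habs
                exact absurd (Finset.mem_range.mpr (by omega)) habs
            · rw [if_neg hs]
              apply Finset.sum_eq_zero
              intro t' ht'
              rw [if_neg]
              intro hpr
              obtain ⟨h1', h2'⟩ := pr_inj hpr
              have e1 : t' = t := Nat.eq_of_mul_eq_mul_right (by omega) h1'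
              have e2 : s - t' = u := Nat.eq_of_mul_eq_mul_right (by omega) h2'
              apply hs
              have : t' < s + 1 := Finset.mem_range.mp ht'
              omega
          symm
          calc ∑ s ∈ Finset.range (N+1), (lam s * ∑ t' ∈ Finset.range (s+1),
                if pr (t'*(n+1)) ((s-t')*(m+1)) = pr (t*(n+1)) (u*(m+1)) then
                  (b*((m:R)+1))^t' * (-(a*((n:R)+1)))^(s-t') * (s.choose t' : R) else 0)
              = ∑ s ∈ Finset.range (N+1), (if s = t+u then
                  lam s * ((b*((m:R)+1))^t * (-(a*((n:R)+1)))^u * (s.choose t : R)) else 0) :=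
                Finset.sum_congr rfl fun s _ => by rw [hinner s, mul_ite, mul_zero]
            _ = if t+u ∈ Finset.range (N+1) then
                  lam (t+u) * ((b*((m:R)+1))^t * (-(a*((n:R)+1)))^u * (((t+u).choose t : ℕ) : R))
                else 0 := Finset.sum_ite_eq' _ _ _
            _ = cf f (t*(n+1)) (u*(m+1)) := by
                split_ifs with hmem'
                · show _ = ee m n f t u
                  rw [hL6 t u]
                  ring
                · symm
                  by_contra hne
                  have hsup : pr (t*(n+1)) (u*(m+1)) ∈ f.support := by
                    rw [MvPolynomial.mem_support_iff]
                    exact hne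
                  have hle := MvPolynomial.le_totalDegree hsup
                  rw [pr_sum] at hle
                  have h1' : t ≤ t*(n+1) := Nat.le_mul_of_pos_right t (by omega)
                  have h2' : u ≤ u*(m+1) := Nat.le_mul_of_pos_right u (by omega)
                  have : ¬ (t+u < N+1) := fun hc => hmem' (Finset.mem_range.mpr hc)
                  omega
        · refine (KerAux.L2 m n a b hb hf j i h2).trans ?_
          symm
          apply Finset.sum_eq_zero
          intro s _
          rw [Finset.sum_eq_zero, mul_zero]
          intro t' _
          rw [if_neg]
          intro hpr
          exact h2 ⟨s - t', ((mul_comm (m+1) (s-t')).trans (pr_inj hpr).2).symm⟩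
      · refine (KerAux.L1 m n a b ha hf i j h1).trans ?_
        symm
        apply Finset.sum_eq_zero
        intro s _
        rw [Finset.sum_eq_zero, mul_zero]
        intro t' _
        rw [if_neg]
        intro hpr
        exact h1 ⟨t', ((mul_comm (n+1) t').trans (pr_inj hpr).1).symm⟩
    rw [hfg]
    have hwmem : w ∈ Algebra.adjoin R {w} := Algebra.subset_adjoin (Set.mem_singleton w)
    apply Subalgebra.sum_mem
    intro s _
    rw [← smul_eq_C_mul]
    exact Subalgebra.smul_mem _ (Subalgebra.pow_mem _ hwmem s) _
  · -- easy direction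
    intro hmem
    have hw0 : D w = 0 := by
      rw [hD]
      show (C a * X 1 ^ m) * pderiv 0 w + (C b * X 0 ^ n) * pderiv 1 w = 0
      have p0 : pderiv (0:Fin 2) w
          = C (b * ((m:R)+1)) * (((n:ℕ)+1 : MvPolynomial (Fin 2) R) * X 0 ^ n) := by
        rw [hw]
        rw [map_sub]
        rw [pderiv_mul, pderiv_mul, pderiv_C, pderiv_C]
        rw [Derivation.leibniz_pow, Derivation.leibniz_pow]
        simp only [smul_eq_mul, pderiv_X_self, pderiv_X_of_ne (show (1:Fin 2) ≠ 0 by decide),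
          mul_zero, zero_mul, mul_one, add_zero, zero_add, sub_zero, map_mul]
        push_cast
        ring
      have p1 : pderiv (1:Fin 2) w
          = -(C (a * ((n:R)+1)) * (((m:ℕ)+1 : MvPolynomial (Fin 2) R) * X 1 ^ m)) := by
        rw [hw]
        rw [map_sub]
        rw [pderiv_mul, pderiv_mul, pderiv_C, pderiv_C]
        rw [Derivation.leibniz_pow, Derivation.leibniz_pow]
        simp only [smul_eq_mul, pderiv_X_self, pderiv_X_of_ne (show (0:Fin 2) ≠ 1 by decide),
          mul_zero, zero_mul, mul_one, add_zero, zero_add, zero_sub, map_mul]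
        push_cast
        ring
      rw [p0, p1]
      rw [show (C (b * ((m:R)+1)) : MvPolynomial (Fin 2) R)
            = C b * (((m:ℕ):MvPolynomial (Fin 2) R) + 1) by
          rw [map_mul, map_add, map_one, map_natCast],
        show (C (a * ((n:R)+1)) : MvPolynomial (Fin 2) R)
            = C a * (((n:ℕ):MvPolynomial (Fin 2) R) + 1) by
          rw [map_mul, map_add, map_one, map_natCast]]
      ring
    refine Algebra.adjoin_induction ?_ ?_ ?_ ?_ hmem
    · intro x hx
      rw [Set.mem_singleton_iff] at hx
      subst hx
      exact hw0
    · intro r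
      exact D.map_algebraMap r
    · intro x y _ _ hx hy
      rw [map_add, hx, hy, add_zero]
    · intro x y _ _ hx hy
      rw [D.leibniz, hx, hy]
      simp
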